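/- For each integer d ≥ 0 define a_d = d · (1/3) · Σ_{i=⌊d/2⌋}^{d} C(d−1, i) (1/3)^i (2/3)^{d−1−i}. Then 2·a_d < 0.98 for every even d, for d = 1, and for every odd d ≥ 29. -/
import Mathlib

open Finset

/-- The coefficient `a_d = d · (1/3) · Σ_{i=⌊d/2⌋}^{d} C(d−1, i) (1/3)^i (2/3)^{d−1−i}`.
(Binomial coefficients out of range are zero; in particular `a_0 = 0`.) -/
noncomputable def aCoef (d : ℕ) : ℝ :=
  (d : ℝ) * (1 / 3) *
    ∑ i ∈ Finset.Icc (d / 2) d,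
      (Nat.choose (d - 1) i : ℝ) * (1 / 3 : ℝ) ^ i * (2 / 3 : ℝ) ^ (d - 1 - i)

noncomputable def tTerm (n i : ℕ) : ℝ :=
  (Nat.choose n i : ℝ) * (1 / 3 : ℝ) ^ i * (2 / 3 : ℝ) ^ (n - i)

lemma tTerm_nonneg (n i : ℕ) : 0 ≤ tTerm n i := by
  unfold tTerm; positivity

lemma tTerm_succ_le {n i : ℕ} (h : n ≤ 2 * i + 1) :
    tTerm n (i + 1) ≤ 1 / 2 * tTerm n i := by
  rcases le_or_gt n i with hni | hni
  · have : Nat.choose n (i + 1) = 0 := Nat.choose_eq_zero_of_lt (by omega)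
    rw [tTerm, this]
    have := tTerm_nonneg n i
    simp
    positivity
  · have hc : Nat.choose n (i + 1) ≤ Nat.choose n i := by
      have h1 := Nat.choose_succ_right_eq n i
      have h2 : n - i ≤ i + 1 := by omega
      have h3 : Nat.choose n i * (n - i) ≤ Nat.choose n i * (i + 1) :=
        Nat.mul_le_mul_left _ h2
      exact Nat.le_of_mul_le_mul_right (h1 ▸ h3) (Nat.succ_pos i)
    have hcc : (Nat.choose n (i + 1) : ℝ) ≤ (Nat.choose n i : ℝ) := by exact_mod_cast hc
    have hsub : n - i = (n - (i + 1)) + 1 := by omega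
    rw [tTerm, tTerm, hsub]
    calc (Nat.choose n (i+1) : ℝ) * (1/3)^(i+1) * (2/3)^(n-(i+1))
        ≤ (Nat.choose n i : ℝ) * (1/3)^(i+1) * (2/3)^(n-(i+1)) := by gcongr
      _ = 1/2 * ((Nat.choose n i : ℝ) * (1/3)^i * (2/3)^(n-(i+1)+1)) := by ring

lemma tTerm_le_geom {n m : ℕ} (h : n ≤ 2 * m + 1) (j : ℕ) :
    tTerm n (m + j) ≤ (1 / 2) ^ j * tTerm n m := by
  induction j with
  | zero => simp
  | succ j ih =>
    calc tTerm n (m + (j + 1)) = tTerm n ((m + j) + 1) := by ring_nf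
      _ ≤ 1 / 2 * tTerm n (m + j) := tTerm_succ_le (by omega)
      _ ≤ 1 / 2 * ((1 / 2) ^ j * tTerm n m) := by linarith
      _ = (1 / 2) ^ (j + 1) * tTerm n m := by ring

lemma sum_tTerm_le {n m d : ℕ} (h : n ≤ 2 * m + 1) :
    ∑ i ∈ Finset.Icc m d, tTerm n i ≤ 2 * tTerm n m := by
  rw [← Finset.Ico_add_one_right_eq_Icc, Finset.sum_Ico_eq_sum_range]
  calc ∑ j ∈ range (d + 1 - m), tTerm n (m + j)
      ≤ ∑ j ∈ range (d + 1 - m), (1 / 2) ^ j * tTerm n m :=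
        Finset.sum_le_sum fun j _ => tTerm_le_geom h j
    _ = (∑ j ∈ range (d + 1 - m), (1 / (2:ℝ)) ^ j) * tTerm n m := by rw [Finset.sum_mul]
    _ ≤ 2 * tTerm n m :=
        mul_le_mul_of_nonneg_right (sum_geometric_two_le _) (tTerm_nonneg n m)

lemma sum_choose_subset_le {n : ℕ} {s : Finset ℕ} (hs : s ⊆ range (n + 1)) :
    ∑ i ∈ s, Nat.choose n i ≤ 2 ^ n := by
  rw [← Nat.sum_range_choose n]
  exact Finset.sum_le_sum_of_subset hs

lemma two_choose_odd_le (p : ℕ) : 2 * Nat.choose (2 * p + 1) (p + 1) ≤ 2 ^ (2 * p + 1) := by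
  have hsymm : Nat.choose (2 * p + 1) p = Nat.choose (2 * p + 1) (p + 1) := by
    have := Nat.choose_symm (show p + 1 ≤ 2 * p + 1 by omega)
    simpa [show 2 * p + 1 - (p + 1) = p by omega] using this
  have hsum : ∑ i ∈ ({p, p + 1} : Finset ℕ), Nat.choose (2 * p + 1) i
      = 2 * Nat.choose (2 * p + 1) (p + 1) := by
    rw [Finset.sum_pair (by omega : p ≠ p + 1), hsymm]; ring
  rw [← hsum]
  exact sum_choose_subset_le (by intro x hx; simp at hx; simp; omega)

lemma two_choose_even_le (k : ℕ) (hk : 1 ≤ k) : 2 * Nat.choose (2 * k) k ≤ 2 ^ (2 * k) := by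
  have h1 := Nat.choose_succ_right_eq (2 * k) k
  have hsub : 2 * k - k = k := by omega
  rw [hsub] at h1
  have hsymm : Nat.choose (2 * k) (k - 1) = Nat.choose (2 * k) (k + 1) := by
    have := Nat.choose_symm (show k + 1 ≤ 2 * k by omega)
    simpa [show 2 * k - (k + 1) = k - 1 by omega] using this
  have hC : Nat.choose (2 * k) k ≤ 2 * Nat.choose (2 * k) (k + 1) := by
    have : Nat.choose (2 * k) k * (k + 1) ≤ (2 * Nat.choose (2 * k) (k + 1)) * (k + 1) := by
      nlinarith [h1]
    exact Nat.le_of_mul_le_mul_right this (by omega)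
  have hsum : ∑ i ∈ ({k - 1, k, k + 1} : Finset ℕ), Nat.choose (2 * k) i
      = Nat.choose (2 * k) (k - 1) + Nat.choose (2 * k) k + Nat.choose (2 * k) (k + 1) := by
    rw [Finset.sum_insert (by simp; omega), Finset.sum_pair (by omega : k ≠ k + 1)]
    ring
  have hle : ∑ i ∈ ({k - 1, k, k + 1} : Finset ℕ), Nat.choose (2 * k) i ≤ 2 ^ (2 * k) :=
    sum_choose_subset_le (by intro x hx; simp at hx; simp; omega)
  omega

lemma nat_even_key : ∀ p : ℕ, 28 ≤ p → 400 * (p + 1) * 8 ^ p < 441 * 9 ^ p := by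
  intro p hp
  induction p, hp using Nat.le_induction with
  | base => norm_num
  | succ p hp ih =>
    have h8 : 400 * (p + 1 + 1) * 8 ^ (p + 1) ≤ 9 * (400 * (p + 1) * 8 ^ p) := by
      have : 8 * (p + 2) ≤ 9 * (p + 1) := by omega
      calc 400 * (p + 1 + 1) * 8 ^ (p + 1) = (8 * (p + 2)) * (400 * 8 ^ p) := by ring
        _ ≤ (9 * (p + 1)) * (400 * 8 ^ p) := Nat.mul_le_mul_right _ this
        _ = 9 * (400 * (p + 1) * 8 ^ p) := by ring
    calc 400 * (p + 1 + 1) * 8 ^ (p + 1) ≤ 9 * (400 * (p + 1) * 8 ^ p) := h8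
      _ < 9 * (441 * 9 ^ p) := by
          exact (Nat.mul_lt_mul_left (show 0 < 9 by norm_num)).mpr ih
      _ = 441 * 9 ^ (p + 1) := by ring

lemma nat_odd_key : ∀ k : ℕ, 33 ≤ k → 100 * (2 * k + 1) * 8 ^ k < 147 * 9 ^ k := by
  intro k hk
  induction k, hk using Nat.le_induction with
  | base => norm_num
  | succ k hk ih =>
    have h8 : 100 * (2 * (k + 1) + 1) * 8 ^ (k + 1) ≤ 9 * (100 * (2 * k + 1) * 8 ^ k) := by
      have : 8 * (2 * k + 3) ≤ 9 * (2 * k + 1) := by omega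
      calc 100 * (2 * (k + 1) + 1) * 8 ^ (k + 1) = (8 * (2 * k + 3)) * (100 * 8 ^ k) := by ring
        _ ≤ (9 * (2 * k + 1)) * (100 * 8 ^ k) := Nat.mul_le_mul_right _ this
        _ = 9 * (100 * (2 * k + 1) * 8 ^ k) := by ring
    calc 100 * (2 * (k + 1) + 1) * 8 ^ (k + 1) ≤ 9 * (100 * (2 * k + 1) * 8 ^ k) := h8
      _ < 9 * (147 * 9 ^ k) := (Nat.mul_lt_mul_left (show 0 < 9 by norm_num)).mpr ih
      _ = 147 * 9 ^ (k + 1) := by ring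

lemma aCoef_even_large {p : ℕ} (hp : 28 ≤ p) : 2 * aCoef (2 * p + 2) < 0.98 := by
  have hm : (2 * p + 2) / 2 = p + 1 := by omega
  have hn : 2 * p + 2 - 1 = 2 * p + 1 := by omega
  have ha : aCoef (2 * p + 2)
      = ((2 * p + 2 : ℕ) : ℝ) * (1 / 3) * ∑ i ∈ Finset.Icc (p + 1) (2 * p + 2), tTerm (2 * p + 1) i := by
    rw [aCoef, hm, hn]; rfl
  have hsum : ∑ i ∈ Finset.Icc (p + 1) (2 * p + 2), tTerm (2 * p + 1) i
      ≤ 2 * tTerm (2 * p + 1) (p + 1) := sum_tTerm_le (by omega)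
  have hC : (Nat.choose (2 * p + 1) (p + 1) : ℝ) ≤ 2 ^ (2 * p) := by
    have h := two_choose_odd_le p
    have h' : (2 : ℝ) * (Nat.choose (2 * p + 1) (p + 1) : ℝ) ≤ 2 ^ (2 * p + 1) := by
      exact_mod_cast h
    rw [pow_succ] at h'
    nlinarith [pow_pos (show (0:ℝ) < 2 by norm_num) (2 * p)]
  have ht : tTerm (2 * p + 1) (p + 1) ≤ 2 ^ (2 * p) * (1 / 3) ^ (p + 1) * (2 / 3) ^ p := by
    rw [tTerm, show 2 * p + 1 - (p + 1) = p by omega]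
    gcongr
  have hnat := nat_even_key p hp
  have hnatR : 400 * ((p : ℝ) + 1) * 8 ^ p < 441 * 9 ^ p := by exact_mod_cast hnat
  have hpow : (2 : ℝ) ^ (2 * p) * (1 / 3) ^ (p + 1) * (2 / 3) ^ p = (8 / 9) ^ p * (1 / 3) := by
    rw [pow_succ, pow_mul, show ((2:ℝ) ^ 2) = 4 by norm_num,
      show ((8:ℝ) / 9) = 4 * (1/3) * (2/3) by norm_num, mul_pow, mul_pow]
    ring
  have key : (8 * ((p : ℝ) + 1) / 9) * (8 / 9) ^ p < 0.98 := by
    have h9 : (0 : ℝ) < 9 ^ p := by positivity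
    rw [div_pow, show (8 * ((p:ℝ) + 1) / 9) * ((8:ℝ) ^ p / 9 ^ p)
        = (8 * ((p:ℝ) + 1) * 8 ^ p) / (9 * 9 ^ p) by ring,
      div_lt_iff₀ (by positivity)]
    nlinarith [hnatR]
  have hd0 : (0 : ℝ) ≤ ((2 * p + 2 : ℕ) : ℝ) * (1 / 3) := by positivity
  calc 2 * aCoef (2 * p + 2)
      = 2 * (((2 * p + 2 : ℕ) : ℝ) * (1 / 3) * ∑ i ∈ Finset.Icc (p + 1) (2 * p + 2), tTerm (2 * p + 1) i) := by rw [ha]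
    _ ≤ 2 * (((2 * p + 2 : ℕ) : ℝ) * (1 / 3) * (2 * tTerm (2 * p + 1) (p + 1))) := by
        have := mul_le_mul_of_nonneg_left hsum hd0
        linarith
    _ ≤ 2 * (((2 * p + 2 : ℕ) : ℝ) * (1 / 3) * (2 * (2 ^ (2 * p) * (1 / 3) ^ (p + 1) * (2 / 3) ^ p))) := by
        have := mul_le_mul_of_nonneg_left (mul_le_mul_of_nonneg_left ht (by norm_num : (0:ℝ) ≤ 2)) hd0
        linarith
    _ = (8 * ((p : ℝ) + 1) / 9) * (8 / 9) ^ p := by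
        rw [hpow]; push_cast; ring
    _ < 0.98 := key

lemma aCoef_odd_large {k : ℕ} (hk : 33 ≤ k) : 2 * aCoef (2 * k + 1) < 0.98 := by
  have hm : (2 * k + 1) / 2 = k := by omega
  have hn : 2 * k + 1 - 1 = 2 * k := by omega
  have ha : aCoef (2 * k + 1)
      = ((2 * k + 1 : ℕ) : ℝ) * (1 / 3) * ∑ i ∈ Finset.Icc k (2 * k + 1), tTerm (2 * k) i := by
    rw [aCoef, hm, hn]; rfl
  have hsum : ∑ i ∈ Finset.Icc k (2 * k + 1), tTerm (2 * k) i
      ≤ 2 * tTerm (2 * k) k := sum_tTerm_le (by omega)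
  have hC : (Nat.choose (2 * k) k : ℝ) ≤ 2 ^ (2 * k) / 2 := by
    have h := two_choose_even_le k (by omega)
    have h' : (2 : ℝ) * (Nat.choose (2 * k) k : ℝ) ≤ 2 ^ (2 * k) := by exact_mod_cast h
    linarith
  have ht : tTerm (2 * k) k ≤ (2 ^ (2 * k) / 2) * (1 / 3) ^ k * (2 / 3) ^ k := by
    rw [tTerm, show 2 * k - k = k by omega]
    gcongr
  have hnat := nat_odd_key k hk
  have hnatR : 100 * (2 * (k : ℝ) + 1) * 8 ^ k < 147 * 9 ^ k := by exact_mod_cast hnat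
  have hpow : ((2 : ℝ) ^ (2 * k) / 2) * (1 / 3) ^ k * (2 / 3) ^ k = (8 / 9) ^ k / 2 := by
    rw [pow_mul, show ((2:ℝ) ^ 2) = 4 by norm_num,
      show ((8:ℝ) / 9) = 4 * (1/3) * (2/3) by norm_num, mul_pow, mul_pow]
    ring
  have key : (2 * (2 * (k : ℝ) + 1) / 3) * (8 / 9) ^ k < 0.98 := by
    have h9 : (0 : ℝ) < 9 ^ k := by positivity
    rw [div_pow, show (2 * (2 * (k:ℝ) + 1) / 3) * ((8:ℝ) ^ k / 9 ^ k)
        = (2 * (2 * (k:ℝ) + 1) * 8 ^ k) / (3 * 9 ^ k) by ring,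
      div_lt_iff₀ (by positivity)]
    nlinarith [hnatR]
  have hd0 : (0 : ℝ) ≤ ((2 * k + 1 : ℕ) : ℝ) * (1 / 3) := by positivity
  calc 2 * aCoef (2 * k + 1)
      = 2 * (((2 * k + 1 : ℕ) : ℝ) * (1 / 3) * ∑ i ∈ Finset.Icc k (2 * k + 1), tTerm (2 * k) i) := by rw [ha]
    _ ≤ 2 * (((2 * k + 1 : ℕ) : ℝ) * (1 / 3) * (2 * tTerm (2 * k) k)) := by
        have := mul_le_mul_of_nonneg_left hsum hd0
        linarith
    _ ≤ 2 * (((2 * k + 1 : ℕ) : ℝ) * (1 / 3) * (2 * ((2 ^ (2 * k) / 2) * (1 / 3) ^ k * (2 / 3) ^ k))) := by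
        have := mul_le_mul_of_nonneg_left (mul_le_mul_of_nonneg_left ht (by norm_num : (0:ℝ) ≤ 2)) hd0
        linarith
    _ = (2 * (2 * (k : ℝ) + 1) / 3) * (8 / 9) ^ k := by
        rw [hpow]; push_cast; ring
    _ < 0.98 := key

set_option maxHeartbeats 0 in
/-- `2·a_d < 0.98` for every even `d`, for `d = 1`, and for every odd `d ≥ 29`. -/
theorem two_aCoef_lt (d : ℕ) (h : Even d ∨ d = 1 ∨ (Odd d ∧ 29 ≤ d)) :
    2 * aCoef d < 0.98 := by
  rcases h with he | rfl | ⟨ho, hd⟩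
  · obtain ⟨k, hk⟩ := he
    rcases le_or_gt 29 k with hk29 | hk29
    · have hdk : d = 2 * (k - 1) + 2 := by omega
      rw [hdk]; exact aCoef_even_large (by omega)
    · subst hk
      interval_cases k <;>
      · rw [aCoef, ← Finset.Ico_add_one_right_eq_Icc, Finset.sum_Ico_eq_sum_range]
        norm_num [Finset.sum_range_succ, Nat.choose_succ_succ]
  · rw [aCoef, ← Finset.Ico_add_one_right_eq_Icc, Finset.sum_Ico_eq_sum_range]
    norm_num [Finset.sum_range_succ, Nat.choose_succ_succ]
  · obtain ⟨k, hk⟩ := ho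
    rcases le_or_gt 33 k with h33 | h33
    · subst hk; exact aCoef_odd_large h33
    · have hk14 : 14 ≤ k := by omega
      subst hk
      interval_cases k <;>
      · rw [aCoef, ← Finset.Ico_add_one_right_eq_Icc, Finset.sum_Ico_eq_sum_range]
        norm_num [Finset.sum_range_succ, Nat.choose_succ_succ]
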